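/- arXiv:1402.5076 — 2 statements merged into one kernel-verified Lean document; each statement's English description precedes it below -/
import Mathlib

section
/- Let z ∈ ℝ^m, let L ≤ m be a nonnegative integer, and consider the problem of minimizing F(Λ) = ∑_{i=1}^m max(0, −Λ_i z_i) over Λ ∈ {−1, +1}^m subject to the constraint that Λ has at most L entries equal to −1. A minimizer is obtained in closed form by flipping the L worst violations: if S ⊆ {1,…,m} satisfies |S| ≤ L, S ⊆ {i : z_i < 0}, z_i ≤ z_j for all i ∈ S and all j ∉ S with z_j < 0, and |S| = min(L, #{i : z_i < 0}), then the vector Λ* with Λ*_i = −1 for i ∈ S and Λ*_i = +1 otherwise satisfies F(Λ*) ≤ F(Λ) for every feasible Λ. -/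
open Finset

/-- Key exchange lemma: if `T'` has at most as many elements as `S`, `g` is nonnegative on `S`,
and every element of `T'` outside `S` has `g`-value at most that of every element of `S`,
then the sum of `g` over `T'` is at most the sum over `S`. -/
lemma key_sum_le {m : ℕ} (g : Fin m → ℝ) (S T' : Finset (Fin m))
    (hcard : T'.card ≤ S.card)
    (hpos : ∀ i ∈ S, 0 ≤ g i)
    (hord : ∀ i ∈ T', i ∉ S → ∀ j ∈ S, g i ≤ g j) :
    ∑ i ∈ T', g i ≤ ∑ i ∈ S, g i := by
  have hsplitT : ∑ i ∈ T', g i = ∑ i ∈ T' ∩ S, g i + ∑ i ∈ T' \ S, g i := by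
    rw [Finset.sum_inter_add_sum_sdiff]
  have hsplitS : ∑ i ∈ S, g i = ∑ i ∈ T' ∩ S, g i + ∑ i ∈ S \ T', g i := by
    rw [Finset.inter_comm]
    rw [Finset.sum_inter_add_sum_sdiff]
  rw [hsplitT, hsplitS]
  have hc : (T' \ S).card ≤ (S \ T').card := by
    have h1 := Finset.card_inter_add_card_sdiff T' S
    have h2 := Finset.card_inter_add_card_sdiff S T'
    rw [Finset.inter_comm S T'] at h2
    omega
  apply add_le_add_right
  by_cases hne : (T' \ S).Nonempty
  · have hSne : (S \ T').Nonempty := by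
      rw [← Finset.card_pos] at hne ⊢; omega
    obtain ⟨j0, hj0mem, hj0min⟩ := Finset.exists_min_image (S \ T') g hSne
    have hj0S : j0 ∈ S := (Finset.mem_sdiff.mp hj0mem).1
    calc ∑ i ∈ T' \ S, g i ≤ (T' \ S).card • g j0 := by
          apply Finset.sum_le_card_nsmul
          intro i hi
          exact hord i (Finset.mem_sdiff.mp hi).1 (Finset.mem_sdiff.mp hi).2 j0 hj0S
      _ ≤ (S \ T').card • g j0 := by
          apply nsmul_le_nsmul_left (hpos j0 hj0S) hc
      _ ≤ ∑ i ∈ S \ T', g i := by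
          apply Finset.card_nsmul_le_sum
          intro i hi
          exact hj0min i hi
  · rw [Finset.not_nonempty_iff_eq_empty] at hne
    rw [hne, Finset.sum_empty]
    exact Finset.sum_nonneg fun i hi => hpos i (Finset.mem_sdiff.mp hi).1

/-- Minimizing `F(Λ) = ∑_i max(0, -Λ_i z_i)` over `Λ ∈ {-1,+1}^m` with at most
`L` entries equal to `-1` is achieved in closed form by flipping the `L` worst violations: if
`S` consists of (at most `L`, and as many as possible, i.e. `min(L, #{i : z_i < 0})`) indices
with `z_i < 0` of smallest value, then `Λ*` with `Λ*_i = -1` on `S` and `+1` elsewhere satisfies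
`F(Λ*) ≤ F(Λ)` for every feasible `Λ`. -/
theorem stmt7 {m : ℕ} (z : Fin m → ℝ) (L : ℕ) (hL : L ≤ m)
    (S : Finset (Fin m)) (hSL : S.card ≤ L)
    (hSneg : ∀ i ∈ S, z i < 0)
    (hSworst : ∀ i ∈ S, ∀ j ∉ S, z j < 0 → z i ≤ z j)
    (hScard : S.card = min L (Finset.univ.filter fun i => z i < 0).card) :
    ∀ Λ : Fin m → ℝ,
      (∀ i, Λ i = 1 ∨ Λ i = -1) →
      (Finset.univ.filter fun i => Λ i = -1).card ≤ L →
      ∑ i, max 0 (-((if i ∈ S then (-1 : ℝ) else 1) * z i)) ≤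
        ∑ i, max 0 (-(Λ i * z i)) := by
  intro Λ hΛ hT
  set N : Finset (Fin m) := Finset.univ.filter fun i => z i < 0 with hN
  set T : Finset (Fin m) := Finset.univ.filter fun i => Λ i = -1 with hTdef
  have hSsubN : S ⊆ N := by
    intro i hi
    simp only [hN, Finset.mem_filter, Finset.mem_univ, true_and]
    exact hSneg i hi
  -- LHS equals sum over N \ S of -z
  have hLHS : ∑ i, max 0 (-((if i ∈ S then (-1 : ℝ) else 1) * z i)) =
      ∑ i ∈ N \ S, (-z i) := by
    rw [← Finset.sum_subset (Finset.subset_univ (N \ S))]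
    · apply Finset.sum_congr rfl
      intro i hi
      obtain ⟨hiN, hiS⟩ := Finset.mem_sdiff.mp hi
      simp only [hN, Finset.mem_filter, Finset.mem_univ, true_and] at hiN
      rw [if_neg hiS, one_mul, max_eq_right (by linarith)]
    · intro i _ hi
      rw [Finset.mem_sdiff, not_and_or, not_not] at hi
      rcases hi with hi | hi
      · have : ¬ z i < 0 := by
          simpa [hN] using hi
        have hiS : i ∉ S := fun h => this (hSneg i h)
        rw [if_neg hiS, one_mul, max_eq_left (by linarith)]
      · rw [if_pos hi, neg_mul, one_mul, neg_neg,
          max_eq_left (le_of_lt (hSneg i hi))]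
  rw [hLHS]
  -- RHS is at least sum over N \ T of -z
  have hRHS : ∑ i ∈ N \ T, (-z i) ≤ ∑ i, max 0 (-(Λ i * z i)) := by
    calc ∑ i ∈ N \ T, (-z i) ≤ ∑ i ∈ N \ T, max 0 (-(Λ i * z i)) := by
          apply Finset.sum_le_sum
          intro i hi
          obtain ⟨hiN, hiT⟩ := Finset.mem_sdiff.mp hi
          simp only [hN, Finset.mem_filter, Finset.mem_univ, true_and] at hiN
          have hΛi : Λ i = 1 := by
            rcases hΛ i with h | h
            · exact h
            · exact absurd (by simpa [hTdef] using h) hiT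
          rw [hΛi, one_mul, max_eq_right (by linarith)]
      _ ≤ ∑ i, max 0 (-(Λ i * z i)) := by
          apply Finset.sum_le_sum_of_subset_of_nonneg (Finset.subset_univ _)
          intro i _ _
          exact le_max_left 0 _
  refine le_trans ?_ hRHS
  -- reduce to key lemma
  rw [Finset.sum_sdiff_eq_sub hSsubN, ← Finset.sdiff_inter_self_left N T,
    Finset.sum_sdiff_eq_sub (Finset.inter_subset_left : N ∩ T ⊆ N)]
  have hkey : ∑ i ∈ N ∩ T, (-z i) ≤ ∑ i ∈ S, (-z i) := by
    apply key_sum_le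
    · have h1 : (N ∩ T).card ≤ T.card := Finset.card_le_card Finset.inter_subset_right
      have h2 : (N ∩ T).card ≤ N.card := Finset.card_le_card Finset.inter_subset_left
      omega
    · intro i hi
      have := hSneg i hi
      linarith
    · intro i hi hiS j hj
      obtain ⟨hiN, _⟩ := Finset.mem_inter.mp hi
      simp only [hN, Finset.mem_filter, Finset.mem_univ, true_and] at hiN
      have := hSworst j hj i hiS hiN
      linarith
  linarith
end

section
/- Let z ∈ ℝ^m, let L ≤ m be a nonnegative integer, and consider the problem of minimizing F₂(Λ) = ½ ∑_{i=1}^m (min(Λ_i z_i, 0))² over Λ ∈ {−1, +1}^m subject to the constraint that Λ has at most L entries equal to −1. A minimizer is obtained by flipping the L worst violations: if S ⊆ {1,…,m} satisfies |S| ≤ L, S ⊆ {i : z_i < 0}, z_i ≤ z_j for all i ∈ S and all j ∉ S with z_j < 0, and |S| = min(L, #{i : z_i < 0}), then the vector Λ* with Λ*_i = −1 for i ∈ S and Λ*_i = +1 otherwise satisfies F₂(Λ*) ≤ F₂(Λ) for every feasible Λ. -/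
open Finset

lemma aux_sum_le {m : ℕ} (w : Fin m → ℝ) (hw : ∀ i, 0 ≤ w i)
    (S T' : Finset (Fin m)) (hcard : T'.card ≤ S.card)
    (hmaj : ∀ j ∈ T' \ S, ∀ i ∈ S \ T', w j ≤ w i) :
    ∑ i ∈ T', w i ≤ ∑ i ∈ S, w i := by
  have h1 := Finset.sum_inter_add_sum_sdiff T' S w
  have h2 := Finset.sum_inter_add_sum_sdiff S T' w
  have hic : T' ∩ S = S ∩ T' := Finset.inter_comm _ _
  have hkey : ∑ i ∈ T' \ S, w i ≤ ∑ i ∈ S \ T', w i := by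
    rcases (T' \ S).eq_empty_or_nonempty with he | hne
    · rw [he, Finset.sum_empty]
      exact Finset.sum_nonneg fun i _ => hw i
    · have hc1 := Finset.card_sdiff_add_card_inter T' S
      have hc2 := Finset.card_sdiff_add_card_inter S T'
      have hceq : (T' ∩ S).card = (S ∩ T').card := by rw [hic]
      have hcd : (T' \ S).card ≤ (S \ T').card := by omega
      have hneS : (S \ T').Nonempty := by
        rw [← Finset.card_pos] at hne ⊢; omega
      obtain ⟨i₀, hi₀, hmin⟩ := Finset.exists_min_image (S \ T') w hneS
      calc ∑ i ∈ T' \ S, w i ≤ (T' \ S).card • w i₀ :=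
            Finset.sum_le_card_nsmul _ _ _ (fun j hj => hmaj j hj i₀ hi₀)
        _ ≤ (S \ T').card • w i₀ := by
            rw [nsmul_eq_mul, nsmul_eq_mul]
            exact mul_le_mul_of_nonneg_right (by exact_mod_cast hcd) (hw i₀)
        _ ≤ ∑ i ∈ S \ T', w i := Finset.card_nsmul_le_sum _ _ _ (fun i hi => hmin i hi)
  rw [← h1, ← h2, hic]
  linarith


/-- Minimizing `F₂(Λ) = ½ ∑_i (min(Λ_i z_i, 0))²` over `Λ ∈ {-1,+1}^m` with at
most `L` entries equal to `-1` is achieved by flipping the `L` worst violations: if `S` consists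
of (at most `L`, and as many as possible, i.e. `min(L, #{i : z_i < 0})`) indices with `z_i < 0`
of smallest value, then `Λ*` with `Λ*_i = -1` on `S` and `+1` elsewhere satisfies
`F₂(Λ*) ≤ F₂(Λ)` for every feasible `Λ`. -/
theorem stmt8 {m : ℕ} (z : Fin m → ℝ) (L : ℕ) (hL : L ≤ m)
    (S : Finset (Fin m)) (hSL : S.card ≤ L)
    (hSneg : ∀ i ∈ S, z i < 0)
    (hSworst : ∀ i ∈ S, ∀ j ∉ S, z j < 0 → z i ≤ z j)
    (hScard : S.card = min L (Finset.univ.filter fun i => z i < 0).card) :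
    ∀ Λ : Fin m → ℝ,
      (∀ i, Λ i = 1 ∨ Λ i = -1) →
      (Finset.univ.filter fun i => Λ i = -1).card ≤ L →
      (1 / 2) * ∑ i, (min ((if i ∈ S then (-1 : ℝ) else 1) * z i) 0) ^ 2 ≤
        (1 / 2) * ∑ i, (min (Λ i * z i) 0) ^ 2 := by
  intro Λ hpm hTL
  set neg : Finset (Fin m) := Finset.univ.filter fun i => z i < 0 with hneg
  set T : Finset (Fin m) := Finset.univ.filter fun i => Λ i = -1 with hT
  set w : Fin m → ℝ := fun i => (z i) ^ 2 with hw
  have hwnn : ∀ i, 0 ≤ w i := fun i => sq_nonneg _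
  set T' : Finset (Fin m) := T ∩ neg with hT'
  -- pointwise bound on RHS terms
  have hg : ∀ i, (if i ∈ T' then 0 else min (z i) 0 ^ 2) ≤ min (Λ i * z i) 0 ^ 2 := by
    intro i
    by_cases hiT' : i ∈ T'
    · simp [hiT', sq_nonneg]
    · rcases hpm i with h1 | h1
      · simp only [hiT', if_false, h1, one_mul]; exact le_refl _
      · have hiT : i ∈ T := by simp [hT, h1]
        have hineg : i ∉ neg := fun hin => hiT' (Finset.mem_inter.mpr ⟨hiT, hin⟩)
        have hz : 0 ≤ z i := by
          by_contra hc
          exact hineg (Finset.mem_filter.mpr ⟨Finset.mem_univ i, not_le.mp hc⟩)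
        simp only [hiT', if_false, h1]
        have : min (z i) 0 = 0 := min_eq_right hz
        rw [this]
        have := sq_nonneg (min ((-1:ℝ) * z i) 0)
        nlinarith
  -- compute LHS terms
  have hf : ∀ i, (min ((if i ∈ S then (-1 : ℝ) else 1) * z i) 0) ^ 2
      = if i ∈ S then 0 else min (z i) 0 ^ 2 := by
    intro i
    by_cases hiS : i ∈ S
    · have := hSneg i hiS
      simp only [hiS, if_true, neg_one_mul]
      rw [min_eq_right (by linarith)]
      norm_num
    · simp [hiS]
  have hsum_eq : ∀ (A : Finset (Fin m)), A ⊆ neg →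
      ∑ i, (if i ∈ A then (0:ℝ) else min (z i) 0 ^ 2) = ∑ i ∈ neg \ A, w i := by
    intro A hA
    rw [← Finset.sum_filter_add_sum_filter_not Finset.univ (fun i => z i < 0)]
    have h0 : ∑ i ∈ Finset.univ.filter (fun i => ¬ z i < 0),
        (if i ∈ A then (0:ℝ) else min (z i) 0 ^ 2) = 0 := by
      apply Finset.sum_eq_zero
      intro i hi
      simp only [Finset.mem_filter] at hi
      have : min (z i) 0 = 0 := min_eq_right (by linarith [not_lt.mp hi.2])
      simp [this]
    rw [h0, add_zero]
    rw [← Finset.sum_filter_add_sum_filter_not neg (fun i => i ∈ A)]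
    have hA1 : neg.filter (fun i => i ∈ A) = A := by
      ext i; simp only [Finset.mem_filter]
      exact ⟨fun h => h.2, fun h => ⟨hA h, h⟩⟩
    have hA2 : neg.filter (fun i => i ∉ A) = neg \ A := by
      ext i; simp [Finset.mem_sdiff]
    rw [hA1, hA2]
    have h3 : ∑ i ∈ A, (if i ∈ A then (0:ℝ) else min (z i) 0 ^ 2) = 0 :=
      Finset.sum_eq_zero fun i hi => by simp [hi]
    rw [h3, zero_add]
    apply Finset.sum_congr rfl
    intro i hi
    simp only [Finset.mem_sdiff] at hi
    have hineg : z i < 0 := by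
      have := hi.1; simp [hneg] at this; exact this
    rw [if_neg hi.2, min_eq_left (le_of_lt hineg)]
  have hSsub : S ⊆ neg := fun i hi => by simp [hneg, hSneg i hi]
  have hT'sub : T' ⊆ neg := Finset.inter_subset_right
  -- main inequality
  have hcard' : T'.card ≤ S.card := by
    have h1 : T'.card ≤ T.card := Finset.card_le_card Finset.inter_subset_left
    have h2 : T'.card ≤ neg.card := Finset.card_le_card hT'sub
    omega
  have hmaj : ∀ j ∈ T' \ S, ∀ i ∈ S \ T', w j ≤ w i := by
    intro j hj i hi
    simp only [Finset.mem_sdiff] at hj hi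
    have hjneg : z j < 0 := by have := hT'sub hj.1; simp [hneg] at this; exact this
    have hiS := hi.1
    have hle : z i ≤ z j := hSworst i hiS j hj.2 hjneg
    have : -z j ≤ -z i := by linarith
    have h2 : (-z j)^2 ≤ (-z i)^2 := pow_le_pow_left₀ (by linarith) this 2
    simpa [hw] using h2
  have hkey : ∑ i ∈ T', w i ≤ ∑ i ∈ S, w i := aux_sum_le w hwnn S T' hcard' hmaj
  have hdiff : ∑ i ∈ neg \ S, w i ≤ ∑ i ∈ neg \ T', w i := by
    have h1 := Finset.sum_sdiff_eq_sub (f := w) hSsub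
    have h2 := Finset.sum_sdiff_eq_sub (f := w) hT'sub
    rw [h1, h2]; linarith
  have hL1 : ∑ i, (min ((if i ∈ S then (-1 : ℝ) else 1) * z i) 0) ^ 2
      = ∑ i ∈ neg \ S, w i := by
    rw [← hsum_eq S hSsub]
    exact Finset.sum_congr rfl fun i _ => hf i
  have hR1 : ∑ i ∈ neg \ T', w i ≤ ∑ i, (min (Λ i * z i) 0) ^ 2 := by
    rw [← hsum_eq T' hT'sub]
    exact Finset.sum_le_sum fun i _ => hg i
  have : ∑ i, (min ((if i ∈ S then (-1 : ℝ) else 1) * z i) 0) ^ 2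
      ≤ ∑ i, (min (Λ i * z i) 0) ^ 2 := by rw [hL1]; linarith
  linarith
end
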